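/- Let n ≥ 6, let V = {0,1,…,n−1} with the natural order, and let Q be a partial quasi-pairing of V such that X := ∪Q is a transversal of mc(underline(n)) and Q is an irreducible quasi-pairing of X. Let M be a nontrivial module of T := Inv(underline(n), Q), and write m^- := min(M), m^+ := max(M). Then for every α ∈ (V ∖ M) with m^- ≤ α ≤ m^+ and every β ∈ M with {α, β} ∈ Q, no element of M lies strictly between min(α,β) and max(α,β). -/

import Mathlib

open Set

/-- The arc relation of the tournament `Inv(underline(V), P)` obtained from the
transitive tournament on a linearly ordered type by reversing the arcs `(x,y)`
with `{x,y} ∈ P`. -/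
def InvArc {α : Type*} [LinearOrder α] (P : Set (Set α)) (x y : α) : Prop :=
  (x < y ∧ ({x, y} : Set α) ∉ P) ∨ (y < x ∧ ({x, y} : Set α) ∈ P)

/-- `M` is a module of the subtournament of `Inv(·, P)` induced on the vertex set `W`. -/
def IsModuleOn {α : Type*} [LinearOrder α] (P : Set (Set α)) (W M : Set α) : Prop :=
  M ⊆ W ∧ ∀ v ∈ W, v ∉ M →
    (∀ x ∈ M, InvArc P v x) ∨ (∀ x ∈ M, InvArc P x v)

/-- A subset of the vertex set `W` is trivial if it is empty, a singleton, or all of `W`. -/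
def IsTrivialSubset {α : Type*} (W M : Set α) : Prop :=
  M = ∅ ∨ (∃ a, M = {a}) ∨ M = W

/-- A nontrivial module of the tournament `Inv(·, P)` induced on `W`. -/
def IsNontrivialModuleOn {α : Type*} [LinearOrder α] (P : Set (Set α)) (W M : Set α) : Prop :=
  IsModuleOn P W M ∧ ¬ IsTrivialSubset W M

/-- The tournament `Inv(·, P)` induced on `W` is indecomposable: all its modules are trivial. -/
def IndecomposableOn {α : Type*} [LinearOrder α] (P : Set (Set α)) (W : Set α) : Prop :=
  ∀ M : Set α, IsModuleOn P W M → IsTrivialSubset W M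

/-- The tournament `Inv(·, P)` induced on `W` is decomposable: it has a nontrivial module. -/
def DecomposableOn {α : Type*} [LinearOrder α] (P : Set (Set α)) (W : Set α) : Prop :=
  ∃ M : Set α, IsNontrivialModuleOn P W M

/-- A co-module of the tournament `Inv(·, P)` on `W`: a subset `M` of `W` such that
`M` or `W ∖ M` is a nontrivial module. -/
def IsCoModuleOn {α : Type*} [LinearOrder α] (P : Set (Set α)) (W M : Set α) : Prop :=
  M ⊆ W ∧ (IsNontrivialModuleOn P W M ∨ IsNontrivialModuleOn P W (W \ M))

/-- `mc(underline(W))`: the family of minimal co-modules of the transitive tournament on `W`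
(a minimal co-module contains no other co-module). -/
def mcOn {α : Type*} [LinearOrder α] (W : Set α) : Set (Set α) :=
  {M | IsCoModuleOn (∅ : Set (Set α)) W M ∧
    ∀ C : Set α, IsCoModuleOn (∅ : Set (Set α)) W C → C ⊆ M → C = M}

/-- `S` is a transversal of the family `F`: it meets every member of `F`. -/
def TransversalOf {α : Type*} (S : Set α) (F : Set (Set α)) : Prop :=
  ∀ C ∈ F, (S ∩ C).Nonempty

/-- A partial pairing of `V`: a set of pairwise disjoint 2-element subsets of `V`. -/
def IsPartialPairingOn {α : Type*} (V : Set α) (P : Set (Set α)) : Prop :=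
  (∀ B ∈ P, B ⊆ V ∧ B.ncard = 2) ∧
  ∀ B ∈ P, ∀ C ∈ P, B ≠ C → Disjoint B C

/-- `I` is an interval of the totally ordered set `X`: every element of `X ∖ I` is greater
than all elements of `I` or smaller than all of them. -/
def IsIntervalOf {α : Type*} [LinearOrder α] (X I : Set α) : Prop :=
  I ⊆ X ∧ ∀ v ∈ X \ I, (∀ i ∈ I, v < i) ∨ (∀ i ∈ I, i < v)

/-- A nontrivial interval of `X`. -/
def IsNontrivialIntervalOf {α : Type*} [LinearOrder α] (X I : Set α) : Prop :=
  IsIntervalOf X I ∧ ¬ IsTrivialSubset X I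

/-- A family of blocks `P` on the totally ordered set `X` is irreducible if no nontrivial
interval of `X` is a union of blocks of `P`. -/
def IrreducibleOn {α : Type*} [LinearOrder α] (X : Set α) (P : Set (Set α)) : Prop :=
  ∀ R ⊆ P, ¬ IsNontrivialIntervalOf X (⋃₀ R)

/-- A partial quasi-pairing of `V`: a set `Q` of `m+1` two-element subsets of `V` (`m ≥ 1`)
whose union has size `2m+1`. -/
def IsPartialQuasiPairingOn {α : Type*} (V : Set α) (Q : Set (Set α)) : Prop :=
  (∀ B ∈ Q, B ⊆ V ∧ B.ncard = 2) ∧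
  ∃ m : ℕ, 1 ≤ m ∧ (⋃₀ Q).ncard = 2 * m + 1 ∧ Q.ncard = m + 1

/-- The distinguished data of a quasi-pairing `Q`: `vh = v̂_Q` is the element lying in the two
blocks `{vh, vm}` and `{vh, vp}` of `Q`, with `vm = v_Q^- < v_Q^+ = vp`. -/
def QPData {α : Type*} [LinearOrder α] (Q : Set (Set α)) (vh vm vp : α) : Prop :=
  ({vh, vm} : Set α) ∈ Q ∧ ({vh, vp} : Set α) ∈ Q ∧ vm < vp

/-- `Q_part`: the partition of `⋃₀ Q` obtained from `Q` by merging its two intersecting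
blocks into `B_Q = {v̂_Q, v_Q^-, v_Q^+}`. -/
def QPart {α : Type*} [LinearOrder α] (Q : Set (Set α)) (vh vm vp : α) : Set (Set α) :=
  (Q \ {({vh, vm} : Set α), ({vh, vp} : Set α)}) ∪ {({vh, vm, vp} : Set α)}

section aux
variable {n : ℕ} {Q : Set (Set ℕ)} {vh vm vp : ℕ}

lemma sUnion_ncard_le_two_mul {S : Set (Set ℕ)} (hS : S.Finite)
    (h : ∀ B ∈ S, B.ncard ≤ 2) : (⋃₀ S).ncard ≤ 2 * S.ncard := by
  refine Set.Finite.induction_on (motive := fun S _ => (∀ B ∈ S, B.ncard ≤ 2) → (⋃₀ S).ncard ≤ 2 * S.ncard) S hS (by simp) ?_ h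
  intro B S hBS hSfin ih h
  have h1 : (⋃₀ insert B S) = B ∪ ⋃₀ S := by simp
  rw [h1]
  have h2 : (B ∪ ⋃₀ S).ncard ≤ B.ncard + (⋃₀ S).ncard := Set.ncard_union_le _ _
  have h3 : (⋃₀ S).ncard ≤ 2 * S.ncard := ih (fun C hC => h C (Set.mem_insert_of_mem _ hC))
  have h4 : (insert B S).ncard = S.ncard + 1 := Set.ncard_insert_of_notMem hBS hSfin
  have h5 : B.ncard ≤ 2 := h B (Set.mem_insert _ _)
  omega

lemma pair_ne (hQ : IsPartialQuasiPairingOn (Set.Iio n) Q) {a b : ℕ}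
    (h : ({a, b} : Set ℕ) ∈ Q) : a ≠ b := by
  intro hab
  have := (hQ.1 _ h).2
  rw [hab] at this
  simp at this

lemma pair_lt (hQ : IsPartialQuasiPairingOn (Set.Iio n) Q) {a b : ℕ}
    (h : ({a, b} : Set ℕ) ∈ Q) : a < n ∧ b < n := by
  have h1 := (hQ.1 _ h).1
  exact ⟨h1 (by simp), h1 (by simp)⟩

lemma blk_fin (hQ : IsPartialQuasiPairingOn (Set.Iio n) Q) {B : Set ℕ} (hB : B ∈ Q) :
    B.Finite :=
  Set.finite_of_ncard_ne_zero (by rw [(hQ.1 _ hB).2]; omega)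

lemma Q_fin (hQ : IsPartialQuasiPairingOn (Set.Iio n) Q) : Q.Finite := by
  obtain ⟨m, hm, hx, hq⟩ := hQ.2
  exact Set.finite_of_ncard_ne_zero (by omega)

lemma pair_of_two {B : Set ℕ} (h2 : B.ncard = 2) {e f : ℕ} (he : e ∈ B) (hf : f ∈ B)
    (hef : e ≠ f) : B = {e, f} := by
  obtain ⟨a, b, hab, rfl⟩ := Set.ncard_eq_two.mp h2
  rcases he with rfl | he <;> rcases hf with rfl | hf
  · exact absurd rfl hef
  · simp at hf; subst hf; rfl
  · simp at he; subst he; exact Set.pair_comm _ _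
  · simp at he hf; subst he hf; exact absurd rfl hef

/-- card bound: `⋃₀ Q ≤ card(U) + 2 * (|Q| - |T|)` when `⋃₀ T ⊆ U`. -/
lemma split_bound (hQ : IsPartialQuasiPairingOn (Set.Iio n) Q)
    (T : Set (Set ℕ)) (hT : T ⊆ Q) (U : Set ℕ) (hU : ⋃₀ T ⊆ U) (hUfin : U.Finite) :
    (⋃₀ Q).ncard ≤ U.ncard + 2 * (Q.ncard - T.ncard) := by
  have hQfin := Q_fin hQ
  have hTfin : T.Finite := hQfin.subset hT
  have h1 : ⋃₀ Q = ⋃₀ T ∪ ⋃₀ (Q \ T) := by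
    rw [← Set.sUnion_union, Set.union_diff_cancel hT]
  rw [h1]
  have h2 := Set.ncard_union_le (⋃₀ T) (⋃₀ (Q \ T))
  have h3 : (⋃₀ (Q \ T)).ncard ≤ 2 * (Q \ T).ncard :=
    sUnion_ncard_le_two_mul hQfin.diff (fun B hB => le_of_eq (hQ.1 _ hB.1).2)
  have h4 : (Q \ T).ncard = Q.ncard - T.ncard := Set.ncard_diff hT hTfin
  have h5 : (⋃₀ T).ncard ≤ U.ncard := Set.ncard_le_ncard hU hUfin
  omega

end aux

section counting
variable {n : ℕ} {Q : Set (Set ℕ)} {vh vm vp : ℕ}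

lemma basics (hQ : IsPartialQuasiPairingOn (Set.Iio n) Q) (hdata : QPData Q vh vm vp) :
    vh ≠ vm ∧ vh ≠ vp ∧ vm ≠ vp ∧ ({vh, vm} : Set ℕ) ≠ {vh, vp} := by
  have h1 : vh ≠ vm := pair_ne hQ hdata.1
  have h2 : vh ≠ vp := pair_ne hQ hdata.2.1
  have h3 : vm ≠ vp := ne_of_lt hdata.2.2
  refine ⟨h1, h2, h3, fun h => ?_⟩
  have : vm ∈ ({vh, vp} : Set ℕ) := h ▸ (by simp : vm ∈ ({vh, vm} : Set ℕ))
  rcases this with h' | h' <;> simp_all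

lemma count_key (hQ : IsPartialQuasiPairingOn (Set.Iio n) Q) (hdata : QPData Q vh vm vp)
    {B : Set ℕ} {x : ℕ} (hB : B ∈ Q) (h1 : B ≠ {vh, vm}) (h2 : B ≠ {vh, vp})
    (hx : x ∈ B) (hx3 : x ∈ ({vh, vm, vp} : Set ℕ)) : False := by
  obtain ⟨hne1, hne2, hne3, hne4⟩ := basics hQ hdata
  obtain ⟨m, hm, hX, hQc⟩ := hQ.2
  set T : Set (Set ℕ) := {({vh, vm} : Set ℕ), ({vh, vp} : Set ℕ), B} with hT
  have hTsub : T ⊆ Q := by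
    intro C hC; rcases hC with rfl | rfl | rfl
    exacts [hdata.1, hdata.2.1, hB]
  have hTcard : T.ncard = 3 := by
    rw [hT, Set.ncard_insert_of_notMem ?_ (Set.toFinite _),
      Set.ncard_insert_of_notMem (by simpa using fun h => h2 h.symm) (Set.toFinite _),
      Set.ncard_singleton]
    simp only [Set.mem_insert_iff, Set.mem_singleton_iff]
    push_neg
    exact ⟨hne4, fun h => h1 h.symm⟩
  have hU : ⋃₀ T ⊆ ({vh, vm, vp} : Set ℕ) ∪ (B \ {x}) := by
    intro e he
    simp only [hT, Set.mem_sUnion, Set.mem_insert_iff, Set.mem_singleton_iff] at he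
    obtain ⟨D, hD, heD⟩ := he
    rcases hD with rfl | rfl | rfl
    · rcases heD with rfl | heD <;> simp_all
    · rcases heD with rfl | heD <;> simp_all
    · by_cases hex : e = x
      · subst hex; left; exact hx3
      · right; exact ⟨heD, hex⟩
  have hUcard : (({vh, vm, vp} : Set ℕ) ∪ (B \ {x})).ncard ≤ 4 := by
    have ha : ({vh, vm, vp} : Set ℕ).ncard ≤ 3 := by
      apply le_trans (Set.ncard_insert_le _ _)
      have := Set.ncard_insert_le vm ({vp} : Set ℕ)
      simp only [Set.ncard_singleton] at this ⊢
      omega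
    have hb : (B \ {x}).ncard = 1 := by
      rw [Set.ncard_diff_singleton_of_mem hx, (hQ.1 _ hB).2]
    calc (({vh, vm, vp} : Set ℕ) ∪ (B \ {x})).ncard
        ≤ ({vh, vm, vp} : Set ℕ).ncard + (B \ {x}).ncard := Set.ncard_union_le _ _
      _ ≤ 4 := by omega
  have hmain := split_bound hQ T hTsub _ hU
    ((Set.toFinite _).union (blk_fin hQ hB).diff)
  have hm3 : 3 ≤ Q.ncard := hTcard ▸ Set.ncard_le_ncard hTsub (Q_fin hQ)
  have hle := le_trans hmain (by omega : (({vh, vm, vp} : Set ℕ) ∪ (B \ {x})).ncard + 2 * (Q.ncard - T.ncard) ≤ 4 + 2 * (Q.ncard - T.ncard))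
  rw [hX, hQc, hTcard] at hle
  rw [hQc] at hm3
  omega

lemma count_two (hQ : IsPartialQuasiPairingOn (Set.Iio n) Q) (hdata : QPData Q vh vm vp)
    {B C : Set ℕ} {x : ℕ} (hB : B ∈ Q) (hC : C ∈ Q) (hBC : B ≠ C)
    (hB1 : B ≠ {vh, vm}) (hB2 : B ≠ {vh, vp}) (hC1 : C ≠ {vh, vm}) (hC2 : C ≠ {vh, vp})
    (hxB : x ∈ B) (hxC : x ∈ C) : False := by
  obtain ⟨hne1, hne2, hne3, hne4⟩ := basics hQ hdata
  obtain ⟨m, hm, hX, hQc⟩ := hQ.2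
  set T : Set (Set ℕ) := {({vh, vm} : Set ℕ), ({vh, vp} : Set ℕ), B, C} with hT
  have hTsub : T ⊆ Q := by
    intro D hD; rcases hD with rfl | rfl | rfl | rfl
    exacts [hdata.1, hdata.2.1, hB, hC]
  have hTcard : T.ncard = 4 := by
    rw [hT, Set.ncard_insert_of_notMem ?_ (Set.toFinite _),
      Set.ncard_insert_of_notMem ?_ (Set.toFinite _),
      Set.ncard_insert_of_notMem (by simpa using hBC) (Set.toFinite _),
      Set.ncard_singleton]
    · simp only [Set.mem_insert_iff, Set.mem_singleton_iff]; push_neg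
      exact ⟨fun h => hB2 h.symm, fun h => hC2 h.symm⟩
    · simp only [Set.mem_insert_iff, Set.mem_singleton_iff]; push_neg
      exact ⟨hne4, fun h => hB1 h.symm, fun h => hC1 h.symm⟩
  have hU : ⋃₀ T ⊆ (({vh, vm, vp} : Set ℕ) ∪ B) ∪ (C \ {x}) := by
    intro e he
    simp only [hT, Set.mem_sUnion, Set.mem_insert_iff, Set.mem_singleton_iff] at he
    obtain ⟨D, hD, heD⟩ := he
    rcases hD with rfl | rfl | rfl | rfl
    · rcases heD with rfl | heD <;> simp_all
    · rcases heD with rfl | heD <;> simp_all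
    · left; right; exact heD
    · by_cases hex : e = x
      · subst hex; left; right; exact hxB
      · right; exact ⟨heD, hex⟩
  have hUcard : ((({vh, vm, vp} : Set ℕ) ∪ B) ∪ (C \ {x})).ncard ≤ 6 := by
    have ha : ({vh, vm, vp} : Set ℕ).ncard ≤ 3 := by
      apply le_trans (Set.ncard_insert_le _ _)
      have := Set.ncard_insert_le vm ({vp} : Set ℕ)
      simp only [Set.ncard_singleton] at this ⊢
      omega
    have hb : (C \ {x}).ncard = 1 := by
      rw [Set.ncard_diff_singleton_of_mem hxC, (hQ.1 _ hC).2]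
    have hb2 : B.ncard = 2 := (hQ.1 _ hB).2
    have h5 := Set.ncard_union_le (({vh, vm, vp} : Set ℕ) ∪ B) (C \ {x})
    have h6 := Set.ncard_union_le ({vh, vm, vp} : Set ℕ) B
    omega
  have hmain := split_bound hQ T hTsub _ hU
    (((Set.toFinite _).union (blk_fin hQ hB)).union (blk_fin hQ hC).diff)
  have hm4 : 4 ≤ Q.ncard := hTcard ▸ Set.ncard_le_ncard hTsub (Q_fin hQ)
  have hle := le_trans hmain (by omega : ((({vh, vm, vp} : Set ℕ) ∪ B) ∪ (C \ {x})).ncard + 2 * (Q.ncard - T.ncard) ≤ 6 + 2 * (Q.ncard - T.ncard))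
  rw [hX, hQc, hTcard] at hle
  rw [hQc] at hm4
  omega

lemma Lvh (hQ : IsPartialQuasiPairingOn (Set.Iio n) Q) (hdata : QPData Q vh vm vp)
    {B : Set ℕ} (hB : B ∈ Q) (h : vh ∈ B) : B = {vh, vm} ∨ B = {vh, vp} := by
  by_contra hcon
  push_neg at hcon
  exact count_key hQ hdata hB hcon.1 hcon.2 h (by simp)

lemma Luniq (hQ : IsPartialQuasiPairingOn (Set.Iio n) Q) (hdata : QPData Q vh vm vp)
    {B C : Set ℕ} {x : ℕ} (hB : B ∈ Q) (hC : C ∈ Q) (hxB : x ∈ B) (hxC : x ∈ C)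
    (hxvh : x ≠ vh) : B = C := by
  obtain ⟨hne1, hne2, hne3, hne4⟩ := basics hQ hdata
  by_contra hne
  by_cases hBs : B = {vh, vm} ∨ B = {vh, vp}
  · have hx3 : x ∈ ({vh, vm, vp} : Set ℕ) := by
      rcases hBs with rfl | rfl
      · rcases hxB with rfl | hxB <;> simp_all
      · rcases hxB with rfl | hxB <;> simp_all
    by_cases hCs : C = {vh, vm} ∨ C = {vh, vp}
    · -- B and C both special, distinct, share x ≠ vh: impossible
      rcases hBs with rfl | rfl <;> rcases hCs with rfl | rfl
      · exact hne rfl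
      · rcases hxB with rfl | hxB
        · exact hxvh rfl
        · simp only [Set.mem_singleton_iff] at hxB; subst hxB
          rcases hxC with h | h
          · exact hne1 h.symm
          · simp only [Set.mem_singleton_iff] at h; exact hne3 h
      · rcases hxB with rfl | hxB
        · exact hxvh rfl
        · simp only [Set.mem_singleton_iff] at hxB; subst hxB
          rcases hxC with h | h
          · exact hne2 h.symm
          · simp only [Set.mem_singleton_iff] at h; exact hne3 h.symm
      · exact hne rfl
    · push_neg at hCs
      exact count_key hQ hdata hC hCs.1 hCs.2 hxC hx3
  · push_neg at hBs
    by_cases hCs : C = {vh, vm} ∨ C = {vh, vp}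
    · have hx3 : x ∈ ({vh, vm, vp} : Set ℕ) := by
        rcases hCs with rfl | rfl
        · rcases hxC with rfl | hxC <;> simp_all
        · rcases hxC with rfl | hxC <;> simp_all
      exact count_key hQ hdata hB hBs.1 hBs.2 hxB hx3
    · push_neg at hCs
      exact count_two hQ hdata hB hC hne hBs.1 hBs.2 hCs.1 hCs.2 hxB hxC

lemma Lpair (hQ : IsPartialQuasiPairingOn (Set.Iio n) Q) (hdata : QPData Q vh vm vp)
    {a b c : ℕ} (h1 : ({a, b} : Set ℕ) ∈ Q) (h2 : ({a, c} : Set ℕ) ∈ Q) (hbc : b ≠ c) :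
    a = vh ∧ ((b = vm ∧ c = vp) ∨ (b = vp ∧ c = vm)) := by
  obtain ⟨hne1, hne2, hne3, hne4⟩ := basics hQ hdata
  have hab : a ≠ b := pair_ne hQ h1
  have hac : a ≠ c := pair_ne hQ h2
  have hBC : ({a, b} : Set ℕ) ≠ {a, c} := by
    intro h
    have : b ∈ ({a, c} : Set ℕ) := h ▸ (by simp : b ∈ ({a, b} : Set ℕ))
    rcases this with h' | h'
    · exact hab h'.symm
    · exact hbc h'
  have havh : a = vh := by
    by_contra ha
    exact hBC (Luniq (x := a) hQ hdata h1 h2 (by simp) (by simp) ha)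
  rw [havh] at h1 h2
  rw [havh] at hab hac
  have hb' : b = vm ∨ b = vp := by
    rcases Lvh hQ hdata h1 (by simp) with h | h
    · left
      have : b ∈ ({vh, vm} : Set ℕ) := h ▸ (by simp : b ∈ ({vh, b} : Set ℕ))
      rcases this with h' | h'
      · exact absurd h'.symm hab
      · exact h'
    · right
      have : b ∈ ({vh, vp} : Set ℕ) := h ▸ (by simp : b ∈ ({vh, b} : Set ℕ))
      rcases this with h' | h'
      · exact absurd h'.symm hab
      · exact h'
  have hc' : c = vm ∨ c = vp := by
    rcases Lvh hQ hdata h2 (by simp) with h | h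
    · left
      have : c ∈ ({vh, vm} : Set ℕ) := h ▸ (by simp : c ∈ ({vh, c} : Set ℕ))
      rcases this with h' | h'
      · exact absurd h'.symm hac
      · exact h'
    · right
      have : c ∈ ({vh, vp} : Set ℕ) := h ▸ (by simp : c ∈ ({vh, c} : Set ℕ))
      rcases this with h' | h'
      · exact absurd h'.symm hac
      · exact h'
  refine ⟨havh, ?_⟩
  rcases hb' with rfl | rfl <;> rcases hc' with rfl | rfl
  · exact absurd rfl hbc
  · exact Or.inl ⟨rfl, rfl⟩
  · exact Or.inr ⟨rfl, rfl⟩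
  · exact absurd rfl hbc

lemma Lvm (hQ : IsPartialQuasiPairingOn (Set.Iio n) Q) (hdata : QPData Q vh vm vp)
    {w : ℕ} (h : ({w, vm} : Set ℕ) ∈ Q) : w = vh := by
  obtain ⟨hne1, hne2, hne3, hne4⟩ := basics hQ hdata
  have hwm : w ≠ vm := pair_ne hQ h
  have := Luniq (x := vm) hQ hdata h hdata.1 (by simp) (by simp) (fun h' => hne1 h'.symm)
  have : w ∈ ({vh, vm} : Set ℕ) := this ▸ (by simp : w ∈ ({w, vm} : Set ℕ))
  rcases this with h' | h'
  · exact h'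
  · exact absurd h' hwm

lemma Lvp (hQ : IsPartialQuasiPairingOn (Set.Iio n) Q) (hdata : QPData Q vh vm vp)
    {w : ℕ} (h : ({w, vp} : Set ℕ) ∈ Q) : w = vh := by
  obtain ⟨hne1, hne2, hne3, hne4⟩ := basics hQ hdata
  have hwp : w ≠ vp := pair_ne hQ h
  have := Luniq (x := vp) hQ hdata h hdata.2.1 (by simp) (by simp) (fun h' => hne2 h'.symm)
  have : w ∈ ({vh, vp} : Set ℕ) := this ▸ (by simp : w ∈ ({w, vp} : Set ℕ))
  rcases this with h' | h'
  · exact h'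
  · exact absurd h' hwp

end counting

lemma empty_not_comodule {n : ℕ} (h : IsCoModuleOn (∅ : Set (Set ℕ)) (Set.Iio n) ∅) :
    False := by
  rcases h.2 with h' | h'
  · exact h'.2 (Or.inl rfl)
  · exact h'.2 (Or.inr (Or.inr (by simp)))

lemma mc_zero {n : ℕ} (hn : 6 ≤ n) : ({0} : Set ℕ) ∈ mcOn (Set.Iio n) := by
  constructor
  · refine ⟨by simp; omega, Or.inr ⟨⟨Set.diff_subset, ?_⟩, ?_⟩⟩
    · intro v hv hv'
      have hv0 : v = 0 := by
        by_contra h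
        exact hv' ⟨hv, by simpa using h⟩
      subst hv0
      left
      intro x hx
      have : x ≠ 0 := by simpa using hx.2
      exact Or.inl ⟨by omega, by simp⟩
    · rintro (h | ⟨a, h⟩ | h)
      · have : (1 : ℕ) ∈ Set.Iio n \ {0} := ⟨by simp; omega, by simp⟩
        rw [h] at this; exact this
      · have h1 : (1 : ℕ) ∈ Set.Iio n \ {0} := ⟨by simp; omega, by simp⟩
        have h2 : (2 : ℕ) ∈ Set.Iio n \ {0} := ⟨by simp; omega, by simp⟩
        rw [h] at h1 h2
        simp only [Set.mem_singleton_iff] at h1 h2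
        omega
      · have : (0 : ℕ) ∈ Set.Iio n := by simp; omega
        rw [← h] at this
        exact this.2 rfl
  · intro C hC hsub
    rcases Set.subset_singleton_iff_eq.mp hsub with rfl | rfl
    · exact absurd hC empty_not_comodule
    · rfl

lemma mc_last {n : ℕ} (hn : 6 ≤ n) : ({n - 1} : Set ℕ) ∈ mcOn (Set.Iio n) := by
  have hdiff : Set.Iio n \ {n - 1} = Set.Iio (n - 1) := by
    ext x; simp only [Set.mem_diff, Set.mem_Iio, Set.mem_singleton_iff]; omega
  constructor
  · refine ⟨by simp; omega, Or.inr ⟨⟨Set.diff_subset, ?_⟩, ?_⟩⟩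
    · intro v hv hv'
      have hv0 : v = n - 1 := by
        by_contra h
        exact hv' ⟨hv, by simpa using h⟩
      subst hv0
      right
      intro x hx
      rw [hdiff] at hx
      simp only [Set.mem_Iio] at hx
      exact Or.inl ⟨by omega, by simp⟩
    · rw [hdiff]
      rintro (h | ⟨a, h⟩ | h)
      · have : (1 : ℕ) ∈ Set.Iio (n - 1) := by simp; omega
        rw [h] at this; exact this
      · have h1 : (1 : ℕ) ∈ Set.Iio (n - 1) := by simp; omega
        have h2 : (2 : ℕ) ∈ Set.Iio (n - 1) := by simp; omega
        rw [h] at h1 h2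
        simp only [Set.mem_singleton_iff] at h1 h2
        omega
      · have : n - 1 ∈ Set.Iio n := by simp; omega
        rw [← h] at this
        simp only [Set.mem_Iio] at this
        omega
  · intro C hC hsub
    rcases Set.subset_singleton_iff_eq.mp hsub with rfl | rfl
    · exact absurd hC empty_not_comodule
    · rfl

lemma mem_pair {a b c : ℕ} (h : a ∈ ({b, c} : Set ℕ)) : a = b ∨ a = c := by simpa using h


lemma caseA (n : ℕ) (hn : 6 ≤ n) (Q : Set (Set ℕ))
    (hQ : IsPartialQuasiPairingOn (Set.Iio n) Q)
    (vh vm vp : ℕ) (hdata : QPData Q vh vm vp)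
    (htrans : TransversalOf (⋃₀ Q) (mcOn (Set.Iio n)))
    (hirr : IrreducibleOn (⋃₀ Q) (QPart Q vh vm vp))
    (M : Set ℕ) (hM : IsNontrivialModuleOn Q (Set.Iio n) M)
    (mlo mhi : ℕ) (hlo : IsLeast M mlo) (hhi : IsGreatest M mhi)
    (o2 : vp < vh) (hvmM : vm ∈ M) (hvpM : vp ∈ M) (hvhM : vh ∉ M)
    (hlo2 : mlo ≤ vh) (hhi2 : vh ≤ mhi) : False := by
  obtain ⟨hne1, hne2, hne3, hne4⟩ := basics hQ hdata
  have hA1 := hdata.1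
  have hA2 := hdata.2.1
  have o1 : vm < vp := hdata.2.2
  have hvhn : vh < n := (pair_lt hQ hA1).1
  have hsubM : M ⊆ Set.Iio n := hM.1.1
  have hdi := hM.1.2
  have hmhiM := hhi.1
  have hmloM := hlo.1
  have hmhin : mhi < n := by simpa using hsubM hmhiM
  have hvhmhi : vh < mhi := lt_of_le_of_ne hhi2 (fun h => hvhM (h ▸ hmhiM))
  have hBQmem : ({vh, vm, vp} : Set ℕ) ∈ QPart Q vh vm vp :=
    Set.mem_union_right _ (Set.mem_singleton _)
  have hvmX : vm ∈ ⋃₀ Q := ⟨_, hA1, by simp⟩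
  have hvpX : vp ∈ ⋃₀ Q := ⟨_, hA2, by simp⟩
  have hvhX : vh ∈ ⋃₀ Q := ⟨_, hA1, by simp⟩
  -- direction at vh : vh beats M
  have hdir : ∀ y ∈ M, InvArc Q vh y := by
    rcases hdi vh (by simpa using hvhn) hvhM with h | h
    · exact h
    · exfalso
      rcases h vm hvmM with ⟨h1, h2⟩ | ⟨h1, _⟩
      · exact h2 (by rwa [Set.pair_comm])
      · omega
  have hbelow : ∀ y ∈ M, y < vh → y = vm ∨ y = vp := by
    intro y hy hylt
    rcases hdir y hy with ⟨h1, _⟩ | ⟨_, h2⟩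
    · omega
    · rcases Lvh hQ hdata h2 (by simp) with h | h
      · left
        have : y ∈ ({vh, vm} : Set ℕ) := h ▸ (show y ∈ ({vh, y} : Set ℕ) by simp)
        rcases mem_pair this with h' | h' <;> omega
      · right
        have : y ∈ ({vh, vp} : Set ℕ) := h ▸ (show y ∈ ({vh, y} : Set ℕ) by simp)
        rcases mem_pair this with h' | h' <;> omega
  have hmlovm : mlo = vm := by
    have h1 : mlo ≤ vm := hlo.2 hvmM
    have h2 : mlo < vh := lt_of_le_of_ne hlo2 (fun h => hvhM (h ▸ hmloM))
    rcases hbelow mlo hmloM h2 with h | h <;> omega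
  have hvmle : ∀ y ∈ M, vm ≤ y := fun y hy => hmlovm ▸ hlo.2 hy
  have hmhile : ∀ y ∈ M, y ≤ mhi := fun y hy => hhi.2 hy
  have hvmmhi : vm ≤ mhi := hvmle mhi hmhiM
  have hMdir : ∀ w, w < n → w ∉ M → vm < w → w ≠ vh → ∀ y ∈ M, InvArc Q y w := by
    intro w h1 h2 h3 h4
    rcases hdi w (by simpa using h1) h2 with h | h
    · exfalso
      rcases h vm hvmM with ⟨hh, _⟩ | ⟨_, hh⟩
      · omega
      · exact h4 (Lvm hQ hdata hh)
    · exact h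
  have hgap : ∀ w, w < n → w ∉ M → vm < w → w < mhi → w ≠ vh → ({w, mhi} : Set ℕ) ∈ Q := by
    intro w h1 h2 h3 h4 h5
    rcases hMdir w h1 h2 h3 h5 mhi hmhiM with ⟨hh, _⟩ | ⟨_, hh⟩
    · omega
    · rwa [Set.pair_comm] at hh
  -- block classification
  have hblk : ∀ B ∈ Q, B ≠ ({vh, vm} : Set ℕ) → B ≠ ({vh, vp} : Set ℕ) →
      ∀ e ∈ B, vm ≤ e → e ≤ mhi → ∀ f ∈ B, vm ≤ f ∧ f ≤ mhi := by
    intro B hB hB1 hB2 e heB he1 he2 f hfB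
    by_cases hfe : f = e
    · subst hfe; exact ⟨he1, he2⟩
    have hBn : B ⊆ Set.Iio n := (hQ.1 _ hB).1
    have hfn : f < n := by simpa using hBn hfB
    have hBef : B = {e, f} := pair_of_two (hQ.1 _ hB).2 heB hfB (fun h => hfe h.symm)
    have hfvh : f ≠ vh := by
      intro h
      rcases Lvh hQ hdata hB (h ▸ hfB) with h' | h'
      · exact hB1 h'
      · exact hB2 h'
    by_cases heM : e ∈ M
    · by_cases hfM : f ∈ M
      · exact ⟨hvmle f hfM, hmhile f hfM⟩
      · rcases hdi f (by simpa using hfn) hfM with h | h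
        · -- f beats M
          exfalso
          have hef : e < f := by
            rcases h e heM with ⟨h1, h2⟩ | ⟨h1, h2⟩
            · exact absurd (show ({f, e} : Set ℕ) ∈ Q by
                rw [Set.pair_comm f e, ← hBef]; exact hB) h2
            · exact h1
          rcases h vm hvmM with ⟨h3, _⟩ | ⟨h3, h4⟩
          · omega
          · exact hfvh (Lvm hQ hdata h4)
        · -- M beats f
          have hfe' : f < e := by
            rcases h e heM with ⟨_, h2⟩ | ⟨h1, _⟩
            · exact absurd (by rw [← hBef]; exact hB) h2
            · exact h1
          have hvmf : vm < f := by
            rcases h vm hvmM with ⟨h1, _⟩ | ⟨_, h2⟩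
            · exact h1
            · exact absurd (Lvm hQ hdata (by rwa [Set.pair_comm] at h2)) hfvh
          have hfmhi : f < mhi := lt_of_lt_of_le hfe' he2
          have hQf := hgap f hfn hfM hvmf hfmhi hfvh
          have hBf : B = {f, mhi} :=
            Luniq (x := f) hQ hdata hB hQf (by rw [hBef]; simp) (by simp) hfvh
          exact ⟨le_of_lt hvmf, le_of_lt hfmhi⟩
    · -- e ∉ M
      have hevm : vm < e := lt_of_le_of_ne he1 (fun h => heM (h ▸ hvmM))
      have hemhi : e < mhi :=
        lt_of_le_of_ne he2 (fun h => heM (by rw [h]; exact hmhiM))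
      have hevh : e ≠ vh := by
        intro h
        rcases Lvh hQ hdata hB (h ▸ heB) with h' | h'
        · exact hB1 h'
        · exact hB2 h'
      have hQe := hgap e (by simpa using hBn heB) heM hevm hemhi hevh
      have hBe : B = {e, mhi} := Luniq (x := e) hQ hdata hB hQe heB (by simp) hevh
      have : f ∈ ({e, mhi} : Set ℕ) := hBe ▸ hfB
      rcases mem_pair this with h' | h'
      · exact absurd h' hfe
      · subst h'; exact ⟨hvmmhi, le_refl _⟩
  by_cases hout : ∃ u ∈ ⋃₀ Q, u < vm ∨ mhi < u
  · -- case A-I : build the interval X ∩ [vm, mhi]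
    obtain ⟨u, huX, huI⟩ := hout
    set R : Set (Set ℕ) :=
      {B | B ∈ QPart Q vh vm vp ∧ (B ∩ Set.Icc vm mhi).Nonempty} with hR
    have hRsub : R ⊆ QPart Q vh vm vp := fun B hB => hB.1
    have hU : ⋃₀ R = ⋃₀ Q ∩ Set.Icc vm mhi := by
      apply Set.Subset.antisymm
      · rintro e ⟨B, ⟨hBQp, hBne⟩, heB⟩
        simp only [QPart, Set.mem_union, Set.mem_diff, Set.mem_singleton_iff,
          Set.mem_insert_iff] at hBQp
        rcases hBQp with ⟨hBQ, hBd⟩ | hBs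
        · push_neg at hBd
          obtain ⟨w, hwB, hwI⟩ := hBne
          simp only [Set.mem_Icc] at hwI
          have hbd := hblk B hBQ hBd.1 hBd.2 w hwB hwI.1 hwI.2 e heB
          exact ⟨⟨B, hBQ, heB⟩, Set.mem_Icc.mpr hbd⟩
        · subst hBs
          simp only [Set.mem_insert_iff, Set.mem_singleton_iff] at heB
          rcases heB with rfl | rfl | rfl
          · exact ⟨hvhX, Set.mem_Icc.mpr (by omega)⟩
          · exact ⟨hvmX, Set.mem_Icc.mpr (by omega)⟩
          · exact ⟨hvpX, Set.mem_Icc.mpr (by omega)⟩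
      · rintro e ⟨⟨B, hBQ, heB⟩, heI⟩
        by_cases hBs : B = ({vh, vm} : Set ℕ) ∨ B = ({vh, vp} : Set ℕ)
        · refine ⟨{vh, vm, vp},
            ⟨hBQmem, ⟨vm, by simp, Set.mem_Icc.mpr (by omega)⟩⟩, ?_⟩
          rcases hBs with rfl | rfl
          · rcases mem_pair heB with rfl | rfl <;> simp
          · rcases mem_pair heB with rfl | rfl <;> simp
        · push_neg at hBs
          refine ⟨B, ⟨Set.mem_union_left _ ⟨hBQ, ?_⟩, ⟨e, heB, heI⟩⟩, heB⟩
          simp only [Set.mem_insert_iff, Set.mem_singleton_iff]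
          push_neg
          exact hBs
    refine hirr R hRsub ?_
    rw [hU]
    refine ⟨⟨Set.inter_subset_left, ?_⟩, ?_⟩
    · rintro v ⟨hvX, hvI⟩
      have hv : ¬(vm ≤ v ∧ v ≤ mhi) := fun h => hvI ⟨hvX, Set.mem_Icc.mpr h⟩
      rcases (by omega : v < vm ∨ mhi < v) with h | h
      · left
        rintro i ⟨_, hi⟩
        simp only [Set.mem_Icc] at hi
        omega
      · right
        rintro i ⟨_, hi⟩
        simp only [Set.mem_Icc] at hi
        omega
    · rintro (h | ⟨a, h⟩ | h)
      · have : vm ∈ ⋃₀ Q ∩ Set.Icc vm mhi := ⟨hvmX, Set.mem_Icc.mpr (by omega)⟩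
        rw [h] at this
        exact this
      · have h1 : vm ∈ ⋃₀ Q ∩ Set.Icc vm mhi := ⟨hvmX, Set.mem_Icc.mpr (by omega)⟩
        have h2 : vp ∈ ⋃₀ Q ∩ Set.Icc vm mhi := ⟨hvpX, Set.mem_Icc.mpr (by omega)⟩
        rw [h] at h1 h2
        simp only [Set.mem_singleton_iff] at h1 h2
        omega
      · rw [← h] at huX
        have := Set.mem_Icc.mp huX.2
        omega
  · -- case A-II
    push_neg at hout
    have h0X : (0 : ℕ) ∈ ⋃₀ Q := by
      obtain ⟨u, huX, hu0⟩ := htrans {0} (mc_zero hn)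
      simp only [Set.mem_singleton_iff] at hu0
      rwa [hu0] at huX
    have hnX : n - 1 ∈ ⋃₀ Q := by
      obtain ⟨u, huX, hu0⟩ := htrans {n - 1} (mc_last hn)
      simp only [Set.mem_singleton_iff] at hu0
      rwa [hu0] at huX
    have hvm0 : vm = 0 := by have := (hout 0 h0X).1; omega
    have hmhiN : mhi = n - 1 := by have := (hout (n - 1) hnX).2; omega
    by_cases hc : vh = vm + 2
    · -- A-II-1 : B_Q = {vm, vm+1, vm+2} is a nontrivial interval
      have hvp1 : vp = vm + 1 := by omega
      refine hirr {({vh, vm, vp} : Set ℕ)} (Set.singleton_subset_iff.mpr hBQmem) ?_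
      rw [Set.sUnion_singleton]
      refine ⟨⟨?_, ?_⟩, ?_⟩
      · intro e he
        simp only [Set.mem_insert_iff, Set.mem_singleton_iff] at he
        rcases he with rfl | rfl | rfl
        exacts [hvhX, hvmX, hvpX]
      · rintro v ⟨hvX, hvB⟩
        simp only [Set.mem_insert_iff, Set.mem_singleton_iff] at hvB
        push_neg at hvB
        right
        intro i hi
        simp only [Set.mem_insert_iff, Set.mem_singleton_iff] at hi
        rcases hi with rfl | rfl | rfl <;> omega
      · rintro (h | ⟨a, h⟩ | h)
        · have : vm ∈ ({vh, vm, vp} : Set ℕ) := by simp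
          rw [h] at this
          exact this
        · have h1 : vm ∈ ({vh, vm, vp} : Set ℕ) := by simp
          have h2 : vh ∈ ({vh, vm, vp} : Set ℕ) := by simp
          rw [h] at h1 h2
          simp only [Set.mem_singleton_iff] at h1 h2
          omega
        · rw [← h] at hnX
          simp only [Set.mem_insert_iff, Set.mem_singleton_iff] at hnX
          omega
    · -- A-II-2
      have hvh3 : vm + 3 ≤ vh := by omega
      obtain ⟨z, hz1, hz2, hzp⟩ : ∃ z, vm < z ∧ z < vh ∧ z ≠ vp := by
        by_cases h : vp = vm + 1
        · exact ⟨vm + 2, by omega, by omega, by omega⟩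
        · exact ⟨vm + 1, by omega, by omega, by omega⟩
      have hzM : z ∉ M := by
        intro h
        rcases hbelow z h hz2 with h' | h' <;> omega
      have hzQ := hgap z (by omega) hzM hz1 (by omega) (by omega)
      have hupz : ∀ y ∈ M, z < y → y = mhi := by
        intro y hy hzy
        rcases hMdir z (by omega) hzM hz1 (by omega) y hy with ⟨h1, _⟩ | ⟨_, h2⟩
        · omega
        · have hBC := Luniq (x := z) hQ hdata h2 hzQ (by simp) (by simp) (by omega)
          have : y ∈ ({z, mhi} : Set ℕ) := hBC ▸ (show y ∈ ({y, z} : Set ℕ) by simp)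
          rcases mem_pair this with h' | h'
          · omega
          · exact h'
      have hvpz : vp < z := by
        by_contra h
        have hzvp : z < vp := by omega
        have := hupz vp hvpM (by omega)
        omega
      have hint : ∀ u, vm < u → u < vh → u = vp ∨ u = z := by
        intro u hu1 hu2
        by_contra hcon
        push_neg at hcon
        obtain ⟨hc1, hc2⟩ := hcon
        have huM : u ∉ M := by
          intro h
          rcases hbelow u h hu2 with h' | h' <;> omega
        have huQ := hgap u (by omega) huM hu1 (by omega) (by omega)
        have := (Lpair hQ hdata (by rwa [Set.pair_comm] at huQ)
          (by rwa [Set.pair_comm] at hzQ) hc2).1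
        omega
      have h11 := hint (vm + 1) (by omega) (by omega)
      have h22 := hint (vm + 2) (by omega) (by omega)
      have hvpe : vp = vm + 1 ∧ z = vm + 2 := by
        rcases h11 with h | h <;> rcases h22 with h' | h' <;> omega
      have hvh4 : vh = vm + 3 := by
        by_contra h
        have := hint (vm + 3) (by omega) (by omega)
        omega
      have hmhi1 : mhi = vh + 1 := by
        by_contra h
        have hu : vh + 1 < mhi := by omega
        by_cases huM : vh + 1 ∈ M
        · have := hupz (vh + 1) huM (by omega)
          omega
        · have huQ := hgap (vh + 1) (by omega) huM (by omega) (by omega) (by omega)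
          have := (Lpair hQ hdata (by rwa [Set.pair_comm] at huQ)
            (by rwa [Set.pair_comm] at hzQ) (by omega)).1
          omega
      omega

lemma caseB (n : ℕ) (hn : 6 ≤ n) (Q : Set (Set ℕ))
    (hQ : IsPartialQuasiPairingOn (Set.Iio n) Q)
    (vh vm vp : ℕ) (hdata : QPData Q vh vm vp)
    (htrans : TransversalOf (⋃₀ Q) (mcOn (Set.Iio n)))
    (hirr : IrreducibleOn (⋃₀ Q) (QPart Q vh vm vp))
    (M : Set ℕ) (hM : IsNontrivialModuleOn Q (Set.Iio n) M)
    (mlo mhi : ℕ) (hlo : IsLeast M mlo) (hhi : IsGreatest M mhi)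
    (o2 : vh < vm) (hvmM : vm ∈ M) (hvpM : vp ∈ M) (hvhM : vh ∉ M)
    (hlo2 : mlo ≤ vh) (hhi2 : vh ≤ mhi) : False := by
  obtain ⟨hne1, hne2, hne3, hne4⟩ := basics hQ hdata
  have hA1 := hdata.1
  have hA2 := hdata.2.1
  have o1 : vm < vp := hdata.2.2
  have hvhn : vh < n := (pair_lt hQ hA1).1
  have hvpn : vp < n := (pair_lt hQ hA2).2
  have hsubM : M ⊆ Set.Iio n := hM.1.1
  have hdi := hM.1.2
  have hmhiM := hhi.1
  have hmloM := hlo.1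
  have hmhin : mhi < n := by simpa using hsubM hmhiM
  have hmlovh : mlo < vh := lt_of_le_of_ne hlo2 (fun h => hvhM (h ▸ hmloM))
  have hBQmem : ({vh, vm, vp} : Set ℕ) ∈ QPart Q vh vm vp :=
    Set.mem_union_right _ (Set.mem_singleton _)
  have hvmX : vm ∈ ⋃₀ Q := ⟨_, hA1, by simp⟩
  have hvpX : vp ∈ ⋃₀ Q := ⟨_, hA2, by simp⟩
  have hvhX : vh ∈ ⋃₀ Q := ⟨_, hA1, by simp⟩
  -- direction at vh : M beats vh
  have hdir : ∀ y ∈ M, InvArc Q y vh := by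
    rcases hdi vh (by simpa using hvhn) hvhM with h | h
    · exfalso
      rcases h vm hvmM with ⟨h1, h2⟩ | ⟨h1, _⟩
      · exact h2 hA1
      · omega
    · exact h
  have habove : ∀ y ∈ M, vh < y → y = vm ∨ y = vp := by
    intro y hy hylt
    rcases hdir y hy with ⟨h1, _⟩ | ⟨_, h2⟩
    · omega
    · rw [Set.pair_comm] at h2
      rcases Lvh hQ hdata h2 (by simp) with h | h
      · left
        have : y ∈ ({vh, vm} : Set ℕ) := h ▸ (show y ∈ ({vh, y} : Set ℕ) by simp)
        rcases mem_pair this with h' | h' <;> omega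
      · right
        have : y ∈ ({vh, vp} : Set ℕ) := h ▸ (show y ∈ ({vh, y} : Set ℕ) by simp)
        rcases mem_pair this with h' | h' <;> omega
  have hmhivp : mhi = vp := by
    have h1 : vp ≤ mhi := hhi.2 hvpM
    rcases habove mhi hmhiM (by omega) with h | h <;> omega
  have hvple : ∀ y ∈ M, y ≤ vp := fun y hy => hmhivp ▸ hhi.2 hy
  have hmlole : ∀ y ∈ M, mlo ≤ y := fun y hy => hlo.2 hy
  have hmlovp : mlo ≤ vp := hmlole vp hvpM
  have hMdir : ∀ w, w < n → w ∉ M → w < vp → w ≠ vh → ∀ y ∈ M, InvArc Q w y := by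
    intro w h1 h2 h3 h4
    rcases hdi w (by simpa using h1) h2 with h | h
    · exact h
    · exfalso
      rcases h vp hvpM with ⟨hh, _⟩ | ⟨_, hh⟩
      · omega
      · exact h4 (Lvp hQ hdata (by rwa [Set.pair_comm] at hh))
  have hgap : ∀ w, w < n → w ∉ M → mlo < w → w < vp → w ≠ vh → ({w, mlo} : Set ℕ) ∈ Q := by
    intro w h1 h2 h3 h4 h5
    rcases hMdir w h1 h2 h4 h5 mlo hmloM with ⟨hh, _⟩ | ⟨_, hh⟩
    · omega
    · exact hh
  -- block classification
  have hblk : ∀ B ∈ Q, B ≠ ({vh, vm} : Set ℕ) → B ≠ ({vh, vp} : Set ℕ) →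
      ∀ e ∈ B, mlo ≤ e → e ≤ vp → ∀ f ∈ B, mlo ≤ f ∧ f ≤ vp := by
    intro B hB hB1 hB2 e heB he1 he2 f hfB
    by_cases hfe : f = e
    · subst hfe; exact ⟨he1, he2⟩
    have hBn : B ⊆ Set.Iio n := (hQ.1 _ hB).1
    have hfn : f < n := by simpa using hBn hfB
    have hBef : B = {e, f} := pair_of_two (hQ.1 _ hB).2 heB hfB (fun h => hfe h.symm)
    have hfvh : f ≠ vh := by
      intro h
      rcases Lvh hQ hdata hB (h ▸ hfB) with h' | h'
      · exact hB1 h'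
      · exact hB2 h'
    by_cases heM : e ∈ M
    · by_cases hfM : f ∈ M
      · exact ⟨hmlole f hfM, hvple f hfM⟩
      · rcases hdi f (by simpa using hfn) hfM with h | h
        · -- f beats M
          have hef : e < f := by
            rcases h e heM with ⟨h1, h2⟩ | ⟨h1, h2⟩
            · exact absurd (show ({f, e} : Set ℕ) ∈ Q by
                rw [Set.pair_comm f e, ← hBef]; exact hB) h2
            · exact h1
          have hfvp : f < vp := by
            rcases h vp hvpM with ⟨h3, _⟩ | ⟨h3, h4⟩
            · exact h3
            · exact absurd (Lvp hQ hdata h4) hfvh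
          have hmlof : mlo < f := by
            have := hmlole e heM; omega
          have hQf := hgap f hfn hfM hmlof hfvp hfvh
          have hBf : B = {f, mlo} :=
            Luniq (x := f) hQ hdata hB hQf (by rw [hBef]; simp) (by simp) hfvh
          exact ⟨le_of_lt hmlof, le_of_lt hfvp⟩
        · -- M beats f
          exfalso
          have hfe' : f < e := by
            rcases h e heM with ⟨_, h2⟩ | ⟨h1, _⟩
            · exact absurd (by rw [← hBef]; exact hB) h2
            · exact h1
          have hvpf : vp < f := by
            rcases h vp hvpM with ⟨h1, _⟩ | ⟨_, h2⟩
            · exact h1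
            · exact absurd (Lvp hQ hdata (by rwa [Set.pair_comm] at h2)) hfvh
          omega
    · -- e ∉ M
      have hmloe : mlo < e := lt_of_le_of_ne he1 (fun h => heM (h ▸ hmloM))
      have hevp : e < vp :=
        lt_of_le_of_ne he2 (fun h => heM (by rw [h]; exact hvpM))
      have hevh : e ≠ vh := by
        intro h
        rcases Lvh hQ hdata hB (h ▸ heB) with h' | h'
        · exact hB1 h'
        · exact hB2 h'
      have hQe := hgap e (by simpa using hBn heB) heM hmloe hevp hevh
      have hBe : B = {e, mlo} := Luniq (x := e) hQ hdata hB hQe heB (by simp) hevh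
      have : f ∈ ({e, mlo} : Set ℕ) := hBe ▸ hfB
      rcases mem_pair this with h' | h'
      · exact absurd h' hfe
      · subst h'; exact ⟨le_refl _, hmlovp⟩
  by_cases hout : ∃ u ∈ ⋃₀ Q, u < mlo ∨ vp < u
  · -- case B-I : build the interval X ∩ [mlo, vp]
    obtain ⟨u, huX, huI⟩ := hout
    set R : Set (Set ℕ) :=
      {B | B ∈ QPart Q vh vm vp ∧ (B ∩ Set.Icc mlo vp).Nonempty} with hR
    have hRsub : R ⊆ QPart Q vh vm vp := fun B hB => hB.1
    have hU : ⋃₀ R = ⋃₀ Q ∩ Set.Icc mlo vp := by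
      apply Set.Subset.antisymm
      · rintro e ⟨B, ⟨hBQp, hBne⟩, heB⟩
        simp only [QPart, Set.mem_union, Set.mem_diff, Set.mem_singleton_iff,
          Set.mem_insert_iff] at hBQp
        rcases hBQp with ⟨hBQ, hBd⟩ | hBs
        · push_neg at hBd
          obtain ⟨w, hwB, hwI⟩ := hBne
          simp only [Set.mem_Icc] at hwI
          have hbd := hblk B hBQ hBd.1 hBd.2 w hwB hwI.1 hwI.2 e heB
          exact ⟨⟨B, hBQ, heB⟩, Set.mem_Icc.mpr hbd⟩
        · subst hBs
          simp only [Set.mem_insert_iff, Set.mem_singleton_iff] at heB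
          rcases heB with rfl | rfl | rfl
          · exact ⟨hvhX, Set.mem_Icc.mpr (by omega)⟩
          · exact ⟨hvmX, Set.mem_Icc.mpr (by omega)⟩
          · exact ⟨hvpX, Set.mem_Icc.mpr (by omega)⟩
      · rintro e ⟨⟨B, hBQ, heB⟩, heI⟩
        by_cases hBs : B = ({vh, vm} : Set ℕ) ∨ B = ({vh, vp} : Set ℕ)
        · refine ⟨{vh, vm, vp},
            ⟨hBQmem, ⟨vp, by simp, Set.mem_Icc.mpr (by omega)⟩⟩, ?_⟩
          rcases hBs with rfl | rfl
          · rcases mem_pair heB with rfl | rfl <;> simp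
          · rcases mem_pair heB with rfl | rfl <;> simp
        · push_neg at hBs
          refine ⟨B, ⟨Set.mem_union_left _ ⟨hBQ, ?_⟩, ⟨e, heB, heI⟩⟩, heB⟩
          simp only [Set.mem_insert_iff, Set.mem_singleton_iff]
          push_neg
          exact hBs
    refine hirr R hRsub ?_
    rw [hU]
    refine ⟨⟨Set.inter_subset_left, ?_⟩, ?_⟩
    · rintro v ⟨hvX, hvI⟩
      have hv : ¬(mlo ≤ v ∧ v ≤ vp) := fun h => hvI ⟨hvX, Set.mem_Icc.mpr h⟩
      rcases (by omega : v < mlo ∨ vp < v) with h | h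
      · left
        rintro i ⟨_, hi⟩
        simp only [Set.mem_Icc] at hi
        omega
      · right
        rintro i ⟨_, hi⟩
        simp only [Set.mem_Icc] at hi
        omega
    · rintro (h | ⟨a, h⟩ | h)
      · have : vm ∈ ⋃₀ Q ∩ Set.Icc mlo vp := ⟨hvmX, Set.mem_Icc.mpr (by omega)⟩
        rw [h] at this
        exact this
      · have h1 : vm ∈ ⋃₀ Q ∩ Set.Icc mlo vp := ⟨hvmX, Set.mem_Icc.mpr (by omega)⟩
        have h2 : vp ∈ ⋃₀ Q ∩ Set.Icc mlo vp := ⟨hvpX, Set.mem_Icc.mpr (by omega)⟩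
        rw [h] at h1 h2
        simp only [Set.mem_singleton_iff] at h1 h2
        omega
      · rw [← h] at huX
        have := Set.mem_Icc.mp huX.2
        omega
  · -- case B-II
    push_neg at hout
    have h0X : (0 : ℕ) ∈ ⋃₀ Q := by
      obtain ⟨u, huX, hu0⟩ := htrans {0} (mc_zero hn)
      simp only [Set.mem_singleton_iff] at hu0
      rwa [hu0] at huX
    have hnX : n - 1 ∈ ⋃₀ Q := by
      obtain ⟨u, huX, hu0⟩ := htrans {n - 1} (mc_last hn)
      simp only [Set.mem_singleton_iff] at hu0
      rwa [hu0] at huX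
    have hmlo0 : mlo = 0 := by have := (hout 0 h0X).1; omega
    have hvpN : vp = n - 1 := by have := (hout (n - 1) hnX).2; omega
    by_cases hc : vp = vh + 2
    · -- B-II-1 : B_Q = {vp-2, vp-1, vp} is a nontrivial interval
      have hvm1 : vm = vh + 1 := by omega
      refine hirr {({vh, vm, vp} : Set ℕ)} (Set.singleton_subset_iff.mpr hBQmem) ?_
      rw [Set.sUnion_singleton]
      refine ⟨⟨?_, ?_⟩, ?_⟩
      · intro e he
        simp only [Set.mem_insert_iff, Set.mem_singleton_iff] at he
        rcases he with rfl | rfl | rfl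
        exacts [hvhX, hvmX, hvpX]
      · rintro v ⟨hvX, hvB⟩
        simp only [Set.mem_insert_iff, Set.mem_singleton_iff] at hvB
        push_neg at hvB
        have hvle := (hout v hvX).2
        left
        intro i hi
        simp only [Set.mem_insert_iff, Set.mem_singleton_iff] at hi
        rcases hi with rfl | rfl | rfl <;> omega
      · rintro (h | ⟨a, h⟩ | h)
        · have : vm ∈ ({vh, vm, vp} : Set ℕ) := by simp
          rw [h] at this
          exact this
        · have h1 : vm ∈ ({vh, vm, vp} : Set ℕ) := by simp
          have h2 : vh ∈ ({vh, vm, vp} : Set ℕ) := by simp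
          rw [h] at h1 h2
          simp only [Set.mem_singleton_iff] at h1 h2
          omega
        · rw [← h] at h0X
          simp only [Set.mem_insert_iff, Set.mem_singleton_iff] at h0X
          omega
    · -- B-II-2
      have hvp3 : vh + 3 ≤ vp := by omega
      obtain ⟨z, hz1, hz2, hzm⟩ : ∃ z, vh < z ∧ z < vp ∧ z ≠ vm := by
        by_cases h : vm = vh + 1
        · exact ⟨vh + 2, by omega, by omega, by omega⟩
        · exact ⟨vh + 1, by omega, by omega, by omega⟩
      have hzM : z ∉ M := by
        intro h
        rcases habove z h hz1 with h' | h' <;> omega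
      have hzQ := hgap z (by omega) hzM (by omega) hz2 (by omega)
      have hdownz : ∀ y ∈ M, y < z → y = mlo := by
        intro y hy hzy
        rcases hMdir z (by omega) hzM hz2 (by omega) y hy with ⟨h1, _⟩ | ⟨_, h2⟩
        · omega
        · have hBC := Luniq (x := z) hQ hdata h2 hzQ (by simp) (by simp) (by omega)
          have : y ∈ ({z, mlo} : Set ℕ) := hBC ▸ (show y ∈ ({z, y} : Set ℕ) by simp)
          rcases mem_pair this with h' | h'
          · omega
          · exact h'
      have hvmz : z < vm := by
        by_contra h
        have hzvm : vm < z := by omega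
        have := hdownz vm hvmM (by omega)
        omega
      have hint : ∀ u, vh < u → u < vp → u = vm ∨ u = z := by
        intro u hu1 hu2
        by_contra hcon
        push_neg at hcon
        obtain ⟨hc1, hc2⟩ := hcon
        have huM : u ∉ M := by
          intro h
          rcases habove u h hu1 with h' | h' <;> omega
        have huQ := hgap u (by omega) huM (by omega) hu2 (by omega)
        have := (Lpair hQ hdata (by rwa [Set.pair_comm] at huQ)
          (by rwa [Set.pair_comm] at hzQ) hc2).1
        omega
      have h11 := hint (vh + 1) (by omega) (by omega)
      have h22 := hint (vh + 2) (by omega) (by omega)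
      have hvme : z = vh + 1 ∧ vm = vh + 2 := by
        rcases h11 with h | h <;> rcases h22 with h' | h' <;> omega
      have hvp4 : vp = vh + 3 := by
        by_contra h
        have := hint (vh + 3) (by omega) (by omega)
        omega
      have hmlo1 : vh = mlo + 1 := by
        by_contra h
        have hu : mlo + 1 < vh := by omega
        by_cases huM : vh - 1 ∈ M
        · have := hdownz (vh - 1) huM (by omega)
          omega
        · have huQ := hgap (vh - 1) (by omega) huM (by omega) (by omega) (by omega)
          have := (Lpair hQ hdata (by rwa [Set.pair_comm] at huQ)
            (by rwa [Set.pair_comm] at hzQ) (by omega)).1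
          omega
      omega

/-- Claim 1. Let `n ≥ 6`, `V = {0, …, n−1}`, `Q` a partial
quasi-pairing of `V` with distinguished data `(vh, vm, vp)` such that `⋃₀ Q` is a
transversal of `mc(underline(n))` and `Q` is irreducible, and let `M` be a nontrivial
module of `T := Inv(underline(n), Q)` with minimum `mlo` and maximum `mhi`. Then for every
`α ∈ V ∖ M` with `mlo ≤ α ≤ mhi` and every `β ∈ M` with `{α, β} ∈ Q`, no element of `M`
lies strictly between `min(α, β)` and `max(α, β)`. -/
theorem stmt_9 (n : ℕ) (hn : 6 ≤ n) (Q : Set (Set ℕ))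
    (hQ : IsPartialQuasiPairingOn (Set.Iio n) Q)
    (vh vm vp : ℕ) (hdata : QPData Q vh vm vp)
    (htrans : TransversalOf (⋃₀ Q) (mcOn (Set.Iio n)))
    (hirr : IrreducibleOn (⋃₀ Q) (QPart Q vh vm vp))
    (M : Set ℕ) (hM : IsNontrivialModuleOn Q (Set.Iio n) M)
    (mlo mhi : ℕ) (hlo : IsLeast M mlo) (hhi : IsGreatest M mhi) :
    ∀ a ∈ Set.Iio n \ M, mlo ≤ a → a ≤ mhi →
      ∀ b ∈ M, ({a, b} : Set ℕ) ∈ Q →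
        ∀ x ∈ M, ¬ (min a b < x ∧ x < max a b) := by
  intro a ha hloa hhia b hb hab x hx hcon
  obtain ⟨h1, h2⟩ := hcon
  obtain ⟨han, haM⟩ := ha
  have hab' : a ≠ b := fun h => haM (h ▸ hb)
  rcases lt_or_gt_of_ne hab' with hlt | hgt
  · -- a < b : configuration of case B
    rw [min_eq_left hlt.le] at h1
    rw [max_eq_right hlt.le] at h2
    have hdirM : ∀ y ∈ M, InvArc Q y a := by
      rcases hM.1.2 a (by simpa using han) haM with h | h
      · exfalso
        rcases h b hb with ⟨hh1, hh2⟩ | ⟨hh1, _⟩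
        · exact hh2 hab
        · omega
      · exact h
    have hxa : ({a, x} : Set ℕ) ∈ Q := by
      rcases hdirM x hx with ⟨hh1, _⟩ | ⟨_, hh2⟩
      · omega
      · rwa [Set.pair_comm] at hh2
    obtain ⟨hav, hor⟩ := Lpair hQ hdata hab hxa (by omega : b ≠ x)
    rcases hor with ⟨hbvm, hxvp⟩ | ⟨hbvp, hxvm⟩
    · have := hdata.2.2
      omega
    · exact caseB n hn Q hQ vh vm vp hdata htrans hirr M hM mlo mhi hlo hhi
        (by omega) (hxvm ▸ hx) (hbvp ▸ hb) (hav ▸ haM) (by omega) (by omega)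
  · -- b < a : configuration of case A
    rw [min_eq_right hgt.le] at h1
    rw [max_eq_left hgt.le] at h2
    have hdirM : ∀ y ∈ M, InvArc Q a y := by
      rcases hM.1.2 a (by simpa using han) haM with h | h
      · exact h
      · exfalso
        rcases h b hb with ⟨hh1, hh2⟩ | ⟨hh1, _⟩
        · exact hh2 (by rwa [Set.pair_comm] at hab)
        · omega
    have hxa : ({a, x} : Set ℕ) ∈ Q := by
      rcases hdirM x hx with ⟨hh1, _⟩ | ⟨_, hh2⟩
      · omega
      · exact hh2
    obtain ⟨hav, hor⟩ := Lpair hQ hdata hab hxa (by omega : b ≠ x)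
    rcases hor with ⟨hbvm, hxvp⟩ | ⟨hbvp, hxvm⟩
    · exact caseA n hn Q hQ vh vm vp hdata htrans hirr M hM mlo mhi hlo hhi
        (by omega) (hbvm ▸ hb) (hxvp ▸ hx) (hav ▸ haM) (by omega) (by omega)
    · have := hdata.2.2
      omega
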